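/- arXiv:2309.07635 — 4 statements merged into one kernel-verified Lean document; each statement's English description precedes it below -/
import Mathlib

section
/- For α ∈ (0,1) there exists a constant C > 0, independent of θ, such that for all θ ∈ ℝ, ∫_0^∞ | e^{-αs}/(1+e^{-s+iθ}) + e^{αs}/(1+e^{s+iθ}) | ds ≤ C. -/
open Real Complex MeasureTheory

open Set Filter Topology


lemma my_int_exp (b : ℝ) (hb : 0 < b) :
    IntegrableOn (fun s : ℝ => Real.exp (-b*s)) (Set.Ioi 0) ∧
    (∫ s in Set.Ioi (0:ℝ), Real.exp (-b*s)) = 1/b := by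
  refine ⟨exp_neg_integrableOn_Ioi 0 hb, ?_⟩
  have hderiv : ∀ x ∈ Set.Ici (0:ℝ),
      HasDerivAt (fun s : ℝ => -(1/b)*Real.exp (-b*s)) (Real.exp (-b*x)) x := by
    intro x _
    have h1 : HasDerivAt (fun s : ℝ => -b*s) (-b) x := by
      simpa using (hasDerivAt_id x).const_mul (-b)
    have h2 := (h1.exp).const_mul (-(1/b))
    refine h2.congr_deriv ?_
    field_simp
  have htend : Tendsto (fun s : ℝ => -(1/b)*Real.exp (-b*s)) atTop (𝓝 0) := by
    have h0 : Tendsto (fun s : ℝ => -b*s) atTop atBot := by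
      exact tendsto_id.const_mul_atTop_of_neg (by linarith)
    have := (Real.tendsto_exp_atBot.comp h0).const_mul (-(1/b))
    simpa using this
  have := integral_Ioi_of_hasDerivAt_of_tendsto' hderiv (exp_neg_integrableOn_Ioi 0 hb) htend
  rw [this]; simp

lemma my_int_poisson (a : ℝ) (ha : 0 < a) :
    IntegrableOn (fun s : ℝ => a/(s^2+a^2)) (Set.Ioi 0) ∧
    (∫ s in Set.Ioi (0:ℝ), a/(s^2+a^2)) = π/2 := by
  have hderiv : ∀ x ∈ Set.Ici (0:ℝ),
      HasDerivAt (fun s : ℝ => Real.arctan (s/a)) (a/(x^2+a^2)) x := by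
    intro x _
    have h1 : HasDerivAt (fun s : ℝ => s/a) (1/a) x := by
      simpa using (hasDerivAt_id x).div_const a
    have h2 := (Real.hasDerivAt_arctan (x/a)).comp x h1
    refine h2.congr_deriv ?_
    have : 0 < x^2 + a^2 := by positivity
    field_simp
    ring
  have hpos : ∀ x ∈ Set.Ioi (0:ℝ), 0 ≤ a/(x^2+a^2) := by
    intro x _; positivity
  have htend : Tendsto (fun s : ℝ => Real.arctan (s/a)) atTop (𝓝 (π/2)) := by
    have h0 : Tendsto (fun s : ℝ => s/a) atTop atTop := tendsto_id.atTop_div_const ha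
    exact (tendsto_nhds_of_tendsto_nhdsWithin Real.tendsto_arctan_atTop).comp h0
  refine ⟨integrableOn_Ioi_deriv_of_nonneg' hderiv hpos htend, ?_⟩
  rw [integral_Ioi_of_hasDerivAt_of_nonneg' hderiv hpos htend]
  simp


lemma my_cosh_cast (x : ℝ) :
    ((Real.cosh x : ℝ) : ℂ) = (Complex.exp x + (Complex.exp x)⁻¹)/2 := by
  rw [Real.cosh_eq]
  push_cast
  rw [Complex.exp_neg]

lemma my_key (α θ s : ℝ) (hs : 0 < s) :
    ‖Complex.exp (-(α:ℂ) * s) / (1 + Complex.exp (-(s:ℂ) + Complex.I * θ)) +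
      Complex.exp ((α:ℂ) * s) / (1 + Complex.exp ((s:ℂ) + Complex.I * θ))‖
    = ‖((Real.cosh (α*s) : ℝ) : ℂ) +
        Complex.exp (Complex.I * θ) * ((Real.cosh ((1-α)*s) : ℝ):ℂ)‖
      / (Real.cosh s + Real.cos θ) := by
  have hden : 0 < Real.cosh s + Real.cos θ := by
    have h1 : 1 < Real.cosh s := Real.one_lt_cosh.mpr hs.ne'
    have h2 := Real.neg_one_le_cos θ
    linarith
  have hmc : ((θ:ℂ)) * Complex.I = Complex.I * (θ:ℂ) := mul_comm _ _
  have hprod : (1 + Complex.exp (-(s:ℂ) + Complex.I * θ)) * (1 + Complex.exp ((s:ℂ) + Complex.I * θ))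
      = Complex.exp (Complex.I*θ) * (2*((Real.cosh s + Real.cos θ : ℝ):ℂ)) := by
    push_cast
    rw [Complex.cosh, Complex.cos, Complex.exp_add, Complex.exp_add, hmc,
      Complex.exp_neg, show ((-θ : ℂ) * Complex.I) = -(Complex.I*(θ:ℂ)) by ring,
      Complex.exp_neg]
    field_simp [Complex.exp_ne_zero]
    ring
  have hRne : ((Real.cosh s + Real.cos θ : ℝ):ℂ) ≠ 0 := by
    exact_mod_cast ne_of_gt (by exact_mod_cast hden : (0:ℝ) < _)
  have hne : Complex.exp (Complex.I*θ) * (2*((Real.cosh s + Real.cos θ : ℝ):ℂ)) ≠ 0 :=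
    mul_ne_zero (Complex.exp_ne_zero _) (mul_ne_zero two_ne_zero hRne)
  have hprodne := hprod ▸ hne
  have hD1 : (1 + Complex.exp (-(s:ℂ) + Complex.I * θ)) ≠ 0 := (mul_ne_zero_iff.mp hprodne).1
  have hD2 : (1 + Complex.exp ((s:ℂ) + Complex.I * θ)) ≠ 0 := (mul_ne_zero_iff.mp hprodne).2
  have e1 : Complex.exp (((1-α)*s : ℝ) : ℂ)
      = Complex.exp (s:ℂ) * (Complex.exp ((α:ℂ)*s))⁻¹ := by
    rw [← Complex.exp_neg, ← Complex.exp_add]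
    push_cast
    ring_nf
  have hA : Complex.exp (-(α:ℂ) * s) = (Complex.exp ((α:ℂ) * s))⁻¹ := by
    rw [← Complex.exp_neg]
    ring_nf
  have hc : Complex.exp ((α*s : ℝ):ℂ) = Complex.exp ((α:ℂ)*s) := by push_cast; ring_nf
  have hnum : Complex.exp (-(α:ℂ)*s) * (1 + Complex.exp ((s:ℂ) + Complex.I * θ))
      + (1 + Complex.exp (-(s:ℂ) + Complex.I * θ)) * Complex.exp ((α:ℂ)*s)
      = 2*(((Real.cosh (α*s):ℝ):ℂ) + Complex.exp (Complex.I*θ) * ((Real.cosh ((1-α)*s):ℝ):ℂ)) := by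
    rw [my_cosh_cast, my_cosh_cast, e1, Complex.exp_add, Complex.exp_add,
      Complex.exp_neg, hA, hc]
    field_simp [Complex.exp_ne_zero]
    ring
  rw [div_add_div _ _ hD1 hD2, hnum, hprod, norm_div, norm_mul, norm_mul, norm_mul]
  simp only [Complex.norm_exp, Complex.norm_real, Real.norm_eq_abs, Complex.norm_two]
  have h0 : (Complex.I * (θ:ℂ)).re = 0 := by simp
  rw [h0, Real.exp_zero, abs_of_pos hden]
  field_simp


lemma my_sinh_le (β u : ℝ) (hβ0 : 0 ≤ β) (hβ1 : β ≤ 1) (hu : 0 ≤ u) :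
    Real.sinh (β*u) ≤ Real.exp ((β-1)*u) * Real.sinh u := by
  have e1 : Real.exp ((β-1)*u) * Real.exp u = Real.exp (β*u) := by
    rw [← Real.exp_add]; ring_nf
  have e2 : Real.exp ((β-1)*u) * Real.exp (-u) = Real.exp ((β-2)*u) := by
    rw [← Real.exp_add]; ring_nf
  have h3 : Real.exp ((β-2)*u) ≤ Real.exp (-(β*u)) := by
    apply Real.exp_le_exp.mpr
    nlinarith
  rw [Real.sinh_eq, Real.sinh_eq]
  have : Real.exp ((β-1)*u) * ((Real.exp u - Real.exp (-u))/2)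
      = (Real.exp (β*u) - Real.exp ((β-2)*u))/2 := by
    linear_combination e1/2 - e2/2
  rw [this]
  linarith

lemma my_norm_one_add (θ : ℝ) :
    ‖1 + Complex.exp (Complex.I*θ)‖ = Real.sqrt (2*(1+Real.cos θ)) := by
  rw [mul_comm, Complex.exp_mul_I, ← Complex.ofReal_cos, ← Complex.ofReal_sin]
  have : (1 : ℂ) + (↑(Real.cos θ) + ↑(Real.sin θ)*Complex.I)
      = ↑(1 + Real.cos θ) + ↑(Real.sin θ)*Complex.I := by push_cast; ring
  rw [this, Complex.norm_add_mul_I]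
  congr 1
  nlinarith [Real.sin_sq_add_cos_sq θ]

lemma my_cosh_diff (α s : ℝ) :
    Real.cosh (α*s) - Real.cosh ((1-α)*s) = 2 * Real.sinh (s/2) * Real.sinh ((2*α-1)*s/2) := by
  rw [show α*s = s/2 + (2*α-1)*s/2 by ring, show (1-α)*s = s/2 - (2*α-1)*s/2 by ring,
    Real.cosh_add, Real.cosh_sub]
  ring

lemma my_cosh_sub_one (s : ℝ) : Real.cosh s - 1 = 2 * Real.sinh (s/2)^2 := by
  conv_lhs => rw [show s = 2*(s/2) by ring]
  rw [Real.cosh_two_mul]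
  nlinarith [Real.cosh_sq (s/2)]

set_option maxHeartbeats 1000000 in
lemma my_ptbound (α θ s : ℝ) (hα0 : 0 < α) (hα1 : α < 1) (hs : 0 < s) :
    ‖((Real.cosh (α*s) : ℝ) : ℂ) + Complex.exp (Complex.I * θ) * ((Real.cosh ((1-α)*s) : ℝ):ℂ)‖
      / (Real.cosh s + Real.cos θ)
    ≤ Real.exp (-((1-|2*α-1|)/2)*s) + 16*Real.exp (-α*s)
      + Real.sqrt (2*(1+Real.cos θ)) * Real.cosh 1 / (s^2/2 + (1+Real.cos θ)) := by
  set c := Real.cos θ with hc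
  set A := Real.cosh (α*s) with hA
  set B := Real.cosh ((1-α)*s) with hB
  set w := Complex.exp (Complex.I*(θ:ℂ)) with hw
  set β := |2*α-1| with hβ
  have hβ0 : 0 ≤ β := abs_nonneg _
  have hβ1 : β ≤ 1 := by rw [hβ, abs_le]; constructor <;> linarith
  have hε0 : 0 ≤ 1 + c := by have := Real.neg_one_le_cos θ; rw [hc]; linarith
  have hden : 0 < Real.cosh s + c := by
    have h1 : 1 < Real.cosh s := Real.one_lt_cosh.mpr hs.ne'
    have h2 := Real.neg_one_le_cos θ
    rw [hc]; linarith
  have hBpos : 0 < B := Real.cosh_pos _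
  have hsinhu : 0 < Real.sinh (s/2) := Real.sinh_pos_iff.mpr (by linarith)
  have hdeneq : Real.cosh s + c = 2*Real.sinh (s/2)^2 + (1+c) := by
    have := my_cosh_sub_one s; linarith
  -- step 1 : norm bound
  have step1 : ‖((A : ℝ) : ℂ) + w * ((B : ℝ):ℂ)‖ ≤ |A - B| + ‖1+w‖ * B := by
    have hsplit : ((A : ℝ) : ℂ) + w * ((B : ℝ):ℂ) = ((A - B : ℝ):ℂ) + (1+w)*((B:ℝ):ℂ) := by
      push_cast; ring
    rw [hsplit]
    calc ‖((A - B : ℝ):ℂ) + (1+w)*((B:ℝ):ℂ)‖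
        ≤ ‖((A - B : ℝ):ℂ)‖ + ‖(1+w)*((B:ℝ):ℂ)‖ := norm_add_le _ _
      _ = |A - B| + ‖1+w‖ * B := by
          rw [norm_mul, Complex.norm_real, Real.norm_eq_abs, Complex.norm_real,
            Real.norm_eq_abs, abs_of_pos hBpos]
  -- term 1 bound
  have habs : |A - B| = 2 * Real.sinh (s/2) * Real.sinh (β*(s/2)) := by
    rw [hA, hB, my_cosh_diff, abs_mul, _root_.abs_of_nonneg (by positivity : (0:ℝ) ≤ 2 * Real.sinh (s/2)),
      Real.abs_sinh, show (2*α-1)*s/2 = (2*α-1)*(s/2) by ring, abs_mul,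
      _root_.abs_of_pos (by linarith : (0:ℝ) < s/2)]
  have term1 : |A - B| / (Real.cosh s + c) ≤ Real.exp (-((1-β)/2)*s) := by
    rw [div_le_iff₀ hden]
    have hS := my_sinh_le β (s/2) hβ0 hβ1 (by linarith)
    have hEq : Real.exp (-((1-β)/2)*s) = Real.exp ((β-1)*(s/2)) := by congr 1; ring
    rw [habs, hEq]
    have k1 : 2*Real.sinh (s/2)*Real.sinh (β*(s/2))
        ≤ 2*Real.sinh (s/2)*(Real.exp ((β-1)*(s/2))*Real.sinh (s/2)) := by nlinarith
    have k2 : 0 ≤ Real.exp ((β-1)*(s/2)) * (1+c) :=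
      mul_nonneg (Real.exp_pos _).le hε0
    have k3 : Real.exp ((β-1)*(s/2)) * (Real.cosh s + c)
        = 2*Real.sinh (s/2)*(Real.exp ((β-1)*(s/2))*Real.sinh (s/2))
          + Real.exp ((β-1)*(s/2)) * (1+c) := by
      rw [hdeneq]; ring
    linarith
  have term2 : ‖1+w‖ * B / (Real.cosh s + c)
      ≤ 16*Real.exp (-α*s) + Real.sqrt (2*(1+c)) * Real.cosh 1 / (s^2/2 + (1+c)) := by
    rcases le_total s 1 with h1 | h1
    · have hnorm : ‖1+w‖ = Real.sqrt (2*(1+c)) := by rw [hw, hc]; exact my_norm_one_add θ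
      have hBle : B ≤ Real.cosh 1 := by
        rw [hB]
        apply Real.cosh_le_cosh.mpr
        rw [abs_one, _root_.abs_of_nonneg (by nlinarith : (0:ℝ) ≤ (1-α)*s)]
        nlinarith
      have hsl : s/2 ≤ Real.sinh (s/2) := Real.self_le_sinh_iff.mpr (by linarith)
      have hden2 : s^2/2 + (1+c) ≤ Real.cosh s + c := by nlinarith [hdeneq]
      have hpos2 : 0 < s^2/2 + (1+c) := by positivity
      have : ‖1+w‖*B/(Real.cosh s + c) ≤ Real.sqrt (2*(1+c)) * Real.cosh 1/(s^2/2+(1+c)) := by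
        rw [hnorm]
        exact div_le_div₀ (by positivity)
          (mul_le_mul_of_nonneg_left hBle (Real.sqrt_nonneg _)) hpos2 hden2
      have h16 : (0:ℝ) ≤ 16*Real.exp (-α*s) := by positivity
      linarith
    · have hnorm : ‖1+w‖ ≤ 2 := by
        calc ‖1+w‖ ≤ ‖(1:ℂ)‖ + ‖w‖ := norm_add_le _ _
          _ = 2 := by
              rw [hw]
              simp [Complex.norm_exp]
              norm_num
      have hBle : B ≤ Real.exp ((1-α)*s) := by
        rw [hB, Real.cosh_eq]
        have := Real.exp_le_exp.mpr (neg_le_self (mul_nonneg (by linarith : (0:ℝ) ≤ 1-α) hs.le))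
        linarith
      have hE : Real.exp ((1-α)*s) = Real.exp s * Real.exp (-α*s) := by
        rw [← Real.exp_add]; ring_nf
      have hcosh : Real.exp s / 2 - 1 ≤ Real.cosh s - 1 := by
        rw [Real.cosh_eq]
        have := (Real.exp_pos (-s)).le
        linarith
      have hexp1 : (2.7182818283 : ℝ) < Real.exp s :=
        lt_of_lt_of_le Real.exp_one_gt_d9 (Real.exp_le_exp.mpr h1)
      have hbound : ‖1+w‖ * B / (Real.cosh s + c) ≤ 16 * Real.exp (-α*s) := by
        rw [div_le_iff₀ hden]
        have hw0 : 0 ≤ ‖1+w‖ := norm_nonneg _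
        have h2 : ‖1+w‖*B ≤ 2 * (Real.exp s * Real.exp (-α*s)) := by nlinarith
        have hden3 : Real.exp s/2 - 1 ≤ Real.cosh s + c := by linarith
        have hpe : 0 < Real.exp (-α*s) := Real.exp_pos _
        nlinarith [mul_le_mul_of_nonneg_left hden3 hpe.le,
          mul_lt_mul_of_pos_left hexp1 hpe]
      have h3 : (0:ℝ) ≤ Real.sqrt (2*(1+c)) * Real.cosh 1 / (s^2/2 + (1+c)) := by positivity
      linarith
  calc ‖((A : ℝ) : ℂ) + w * ((B : ℝ):ℂ)‖ / (Real.cosh s + c)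
      ≤ (|A - B| + ‖1+w‖ * B) / (Real.cosh s + c) := by gcongr
    _ = |A - B|/(Real.cosh s + c) + ‖1+w‖*B/(Real.cosh s + c) := add_div _ _ _
    _ ≤ _ := by linarith

theorem stmt_5 (α : ℝ) (hα : α ∈ Set.Ioo (0:ℝ) 1) :
    ∃ C : ℝ, 0 < C ∧ ∀ θ : ℝ,
      (∫ s in Set.Ioi (0:ℝ),
        ‖Complex.exp (-(α:ℂ) * s) / (1 + Complex.exp (-(s:ℂ) + Complex.I * θ)) +
          Complex.exp ((α:ℂ) * s) / (1 + Complex.exp ((s:ℂ) + Complex.I * θ))‖) ≤ C := by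
  obtain ⟨hα0, hα1⟩ := hα
  set β := |2*α-1| with hβ
  have hβ1 : β < 1 := abs_lt.mpr ⟨by linarith, by linarith⟩
  have hβ0 : 0 ≤ β := abs_nonneg _
  have hb1 : 0 < (1-β)/2 := by linarith
  refine ⟨2/(1-β) + 16*(1/α) + π*Real.cosh 1, ?_, ?_⟩
  · have h1 : 0 < 2/(1-β) := div_pos two_pos (by linarith)
    have h2 : 0 < 16*(1/α) := by positivity
    have h3 : 0 < π*Real.cosh 1 := by positivity
    linarith
  intro θ
  set ε := 1 + Real.cos θ with hε
  have hε0 : 0 ≤ ε := by have := Real.neg_one_le_cos θ; rw [hε]; linarith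
  obtain ⟨hg1i, hg1v⟩ := my_int_exp ((1-β)/2) hb1
  obtain ⟨hg2i, hg2v⟩ := my_int_exp α hα0
  have hg2i' : IntegrableOn (fun s : ℝ => 16*Real.exp (-α*s)) (Set.Ioi 0) := hg2i.const_mul 16
  have hg3 : IntegrableOn (fun s : ℝ => Real.sqrt (2*ε)*Real.cosh 1/(s^2/2+ε)) (Set.Ioi 0) ∧
      (∫ s in Set.Ioi (0:ℝ), Real.sqrt (2*ε)*Real.cosh 1/(s^2/2+ε)) ≤ π*Real.cosh 1 := by
    rcases eq_or_lt_of_le hε0 with h0 | h0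
    · have hfun : (fun s : ℝ => Real.sqrt (2*ε)*Real.cosh 1/(s^2/2+ε)) = fun _ => (0:ℝ) := by
        funext s
        rw [← h0]
        simp
      rw [hfun]
      refine ⟨integrable_zero _ _ _, ?_⟩
      rw [integral_zero]
      positivity
    · set a := Real.sqrt (2*ε) with hadef
      have ha : 0 < a := Real.sqrt_pos.mpr (by linarith)
      have ha2 : a^2 = 2*ε := Real.sq_sqrt (by linarith)
      obtain ⟨hint, hval⟩ := my_int_poisson a ha
      have hfun : (fun s : ℝ => Real.sqrt (2*ε)*Real.cosh 1/(s^2/2+ε))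
          = fun s => (2*Real.cosh 1) * (a/(s^2+a^2)) := by
        funext s
        have d1 : (0:ℝ) < s^2/2 + ε := by nlinarith [sq_nonneg s]
        rw [show s^2+a^2 = 2*(s^2/2+ε) by rw [ha2]; ring]
        conv_rhs => rw [← mul_div_assoc]
        rw [div_eq_div_iff d1.ne' (by linarith : (2:ℝ)*(s^2/2+ε) ≠ 0)]
        ring
      rw [hfun]
      refine ⟨hint.const_mul _, ?_⟩
      rw [integral_const_mul, hval]
      have := Real.cosh_pos (1:ℝ)
      nlinarith [Real.pi_pos]
  have hle : ∀ s ∈ Set.Ioi (0:ℝ),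
      ‖Complex.exp (-(α:ℂ) * s) / (1 + Complex.exp (-(s:ℂ) + Complex.I * θ)) +
        Complex.exp ((α:ℂ) * s) / (1 + Complex.exp ((s:ℂ) + Complex.I * θ))‖
      ≤ Real.exp (-((1-β)/2)*s) + 16*Real.exp (-α*s) + Real.sqrt (2*ε)*Real.cosh 1/(s^2/2+ε) := by
    intro s hs
    rw [my_key α θ s hs]
    exact my_ptbound α θ s hα0 hα1 hs
  have hgint : IntegrableOn (fun s : ℝ => Real.exp (-((1-β)/2)*s) + 16*Real.exp (-α*s)
      + Real.sqrt (2*ε)*Real.cosh 1/(s^2/2+ε)) (Set.Ioi 0) := (hg1i.add hg2i').add hg3.1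
  calc (∫ s in Set.Ioi (0:ℝ),
        ‖Complex.exp (-(α:ℂ) * s) / (1 + Complex.exp (-(s:ℂ) + Complex.I * θ)) +
          Complex.exp ((α:ℂ) * s) / (1 + Complex.exp ((s:ℂ) + Complex.I * θ))‖)
      ≤ ∫ s in Set.Ioi (0:ℝ), (Real.exp (-((1-β)/2)*s) + 16*Real.exp (-α*s)
          + Real.sqrt (2*ε)*Real.cosh 1/(s^2/2+ε)) := by
        apply integral_mono_of_nonneg (Eventually.of_forall (fun s => norm_nonneg _)) hgint
        exact (ae_restrict_iff' measurableSet_Ioi).mpr (Eventually.of_forall hle)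
    _ = (∫ s in Set.Ioi (0:ℝ), Real.exp (-((1-β)/2)*s))
        + (∫ s in Set.Ioi (0:ℝ), 16*Real.exp (-α*s))
        + (∫ s in Set.Ioi (0:ℝ), Real.sqrt (2*ε)*Real.cosh 1/(s^2/2+ε)) := by
        have hsum12 : IntegrableOn (fun s : ℝ => Real.exp (-((1-β)/2)*s)
            + 16*Real.exp (-α*s)) (Set.Ioi 0) := hg1i.add hg2i'
        rw [integral_add hsum12 hg3.1, integral_add hg1i hg2i']
    _ ≤ 2/(1-β) + 16*(1/α) + π*Real.cosh 1 := by
        rw [hg1v, integral_const_mul, hg2v]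
        have h1 : 1/((1-β)/2) = 2/(1-β) := by
          field_simp
        rw [h1]
        linarith [hg3.2]
end

section
/- For α ∈ (0,1), θ ∈ ℝ, and s ∈ ℝ with 1 + e^{s+iθ} ≠ 0, the symmetric sum ∑_{j∈ℤ} e^{-2πiαj} ( 1/((θ+2jπ)+π−is) − 1/((θ+2jπ)−π−is) ) equals 2 sin(πα) · e^{α(s+iθ)}/(1 + e^{s+iθ}). -/
open Real Complex Filter

theorem stmt_9 (α θ s : ℝ) (hα : α ∈ Set.Ioo (0:ℝ) 1)
    (h : 1 + Complex.exp ((s:ℂ) + Complex.I * θ) ≠ 0) :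
    Tendsto
      (fun N : ℕ => ∑ j ∈ Finset.Icc (-(N:ℤ)) (N:ℤ),
        Complex.exp (-2 * π * Complex.I * α * (j:ℂ)) *
          (1 / (((θ:ℂ) + 2 * (j:ℂ) * π) + π - Complex.I * s) -
           1 / (((θ:ℂ) + 2 * (j:ℂ) * π) - π - Complex.I * s)))
      atTop
      (nhds (2 * Real.sin (π * α) *
        Complex.exp ((α:ℂ) * ((s:ℂ) + Complex.I * θ)) /
          (1 + Complex.exp ((s:ℂ) + Complex.I * θ)))) := by
  have hT : Fact ((0:ℝ) < 1) := ⟨one_pos⟩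
  set E : ℂ := Complex.exp ((s:ℂ) + Complex.I * θ) with hE
  set D : ℂ := 1 + E with hD
  set a : ℂ := (θ:ℂ) + π - Complex.I * s with ha
  set b : ℂ := (θ:ℂ) - π - Complex.I * s with hb
  -- exponential values
  have hEa : Complex.exp (Complex.I * a) = -E := by
    rw [show Complex.I * a = ((s:ℂ) + Complex.I * θ) + π * Complex.I by
      rw [ha]; linear_combination (-(s:ℂ)) * Complex.I_sq, Complex.exp_add,
      Complex.exp_pi_mul_I]; ring
  have hEb : Complex.exp (Complex.I * b) = -E := by
    rw [show Complex.I * b = ((s:ℂ) + Complex.I * θ) + -(π * Complex.I) by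
      rw [hb]; linear_combination (-(s:ℂ)) * Complex.I_sq, Complex.exp_add,
      Complex.exp_neg, Complex.exp_pi_mul_I]
    simp [hE]
  have ha2 : ∀ n : ℤ, a - 2 * π * n ≠ 0 := by
    intro n h0
    have hA : a = 2 * π * n := by linear_combination h0
    have : Complex.exp (Complex.I * a) = 1 := by
      rw [hA, show Complex.I * (2 * (π:ℂ) * n) = (n:ℂ) * (2 * π * Complex.I) by ring]
      exact Complex.exp_int_mul_two_pi_mul_I n
    rw [hEa] at this
    apply h
    rw [hD, show E = -1 by linear_combination -this]; ring
  have hb2 : ∀ n : ℤ, b - 2 * π * n ≠ 0 := by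
    intro n h0
    have hA : b = 2 * π * n := by linear_combination h0
    have : Complex.exp (Complex.I * b) = 1 := by
      rw [hA, show Complex.I * (2 * (π:ℂ) * n) = (n:ℂ) * (2 * π * Complex.I) by ring]
      exact Complex.exp_int_mul_two_pi_mul_I n
    rw [hEb] at this
    apply h
    rw [hD, show E = -1 by linear_combination -this]; ring
  -- the periodic function
  set g : ℝ → ℂ := fun x => (-Complex.I / D) *
      (Complex.exp (Complex.I * a * x) - Complex.exp (Complex.I * b * x)) with hg
  have hg0 : g 0 = g (0 + 1) := by
    simp only [hg, zero_add, Complex.ofReal_zero, Complex.ofReal_one, mul_zero, mul_one,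
      Complex.exp_zero, hEa, hEb, sub_self, mul_zero]
  have hgc : ContinuousOn g (Set.Icc 0 (0 + 1)) := by
    apply Continuous.continuousOn
    fun_prop
  set F : C(AddCircle (1:ℝ), ℂ) :=
    ⟨AddCircle.liftIco 1 0 g, AddCircle.liftIco_continuous hg0 hgc⟩ with hF
  -- coefficients
  set c : ℤ → ℂ := fun n => 1 / (a - 2 * π * n) - 1 / (b - 2 * π * n) with hc
  have hIa : ∀ n : ℤ, Complex.I * a - 2 * π * Complex.I * n ≠ 0 := by
    intro n h0
    apply ha2 n
    have : Complex.I * (a - 2 * π * n) = 0 := by linear_combination h0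
    rcases mul_eq_zero.mp this with h1 | h1
    · exact absurd h1 Complex.I_ne_zero
    · exact h1
  have hIb : ∀ n : ℤ, Complex.I * b - 2 * π * Complex.I * n ≠ 0 := by
    intro n h0
    apply hb2 n
    have : Complex.I * (b - 2 * π * n) = 0 := by linear_combination h0
    rcases mul_eq_zero.mp this with h1 | h1
    · exact absurd h1 Complex.I_ne_zero
    · exact h1
  have hcoef : ∀ n : ℤ, fourierCoeff (F : AddCircle (1:ℝ) → ℂ) n = c n := by
    intro n
    have : fourierCoeff (F : AddCircle (1:ℝ) → ℂ) n = fourierCoeffOn (by norm_num : (0:ℝ) < 0 + 1) g n := by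
      exact fourierCoeff_liftIco_eq g n
    rw [this, fourierCoeffOn_eq_integral]
    have key : (∫ x in (0:ℝ)..(0+1), fourier (-n) (x : AddCircle (0+1-0:ℝ)) • g x)
        = (-Complex.I / D) *
          ((∫ x in (0:ℝ)..1, Complex.exp ((Complex.I * a - 2 * π * Complex.I * n) * x))
           - ∫ x in (0:ℝ)..1, Complex.exp ((Complex.I * b - 2 * π * Complex.I * n) * x)) := by
      rw [show (0:ℝ) + 1 = 1 by norm_num]
      rw [← intervalIntegral.integral_sub, ← intervalIntegral.integral_const_mul]
      · apply intervalIntegral.integral_congr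
        intro x _
        have hsplit : ∀ z : ℂ, (Complex.I * z - 2 * π * Complex.I * n) * (x:ℂ)
            = (2 * π * Complex.I * (-n:ℤ) * x / (1:ℝ)) + Complex.I * z * x := by
          intro z; push_cast; ring
        simp only [smul_eq_mul, fourier_coe_apply]
        rw [hsplit a, hsplit b, Complex.exp_add, Complex.exp_add, hg]
        push_cast
        ring
      · exact (Complex.continuous_exp.comp (continuous_const.mul Complex.continuous_ofReal)).intervalIntegrable _ _
      · exact (Complex.continuous_exp.comp (continuous_const.mul Complex.continuous_ofReal)).intervalIntegrable _ _
    rw [key, integral_exp_mul_complex (hIa n), integral_exp_mul_complex (hIb n)]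
    have hexp : ∀ z : ℂ, Complex.exp (Complex.I * z) = -E →
        Complex.exp (Complex.I * z - 2 * π * Complex.I * n) = -E := by
      intro z hz
      rw [show Complex.I * z - 2 * π * Complex.I * n
          = Complex.I * z + (-n:ℤ) * (2 * π * Complex.I) by push_cast; ring,
        Complex.exp_add, Complex.exp_int_mul_two_pi_mul_I, hz, mul_one]
    simp only [Complex.ofReal_one, Complex.ofReal_zero, mul_one, mul_zero, Complex.exp_zero,
      smul_eq_mul]
    simp only [zero_add, sub_zero, div_one, one_smul]
    rw [hexp a hEa, hexp b hEb, hc]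
    have h1 := hIa n
    have h2 := hIb n
    have h3 := ha2 n
    have h4 := hb2 n
    field_simp
    ring_nf
    rw [hD]; ring
  -- summability
  have hsummable : Summable c := by
    have hbig : Summable (fun n : ℤ => 2 * π * |1 / (n:ℝ) ^ 2|) := by
      apply Summable.mul_left
      exact (summable_one_div_int_pow.mpr one_lt_two).abs
    apply Summable.of_norm_bounded_eventually hbig
    rw [Int.cofinite_eq, Filter.eventually_sup]
    have key : ∀ n : ℤ, (‖a‖ + ‖b‖ + 1 ≤ |(n:ℝ)|) → ‖c n‖ ≤ 2 * π * |1 / (n:ℝ) ^ 2| := by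
      intro n hn
      have hna : ‖a‖ ≤ |(n:ℝ)| := by
        have := norm_nonneg b; linarith
      have hnb : ‖b‖ ≤ |(n:ℝ)| := by
        have := norm_nonneg a; linarith
      have h2 : ‖(2 * (π:ℂ) * n)‖ = 2 * π * |(n:ℝ)| := by
        rw [show (2 * (π:ℂ) * n) = ((2 * π * n : ℝ) : ℂ) by push_cast; ring,
          Complex.norm_real, Real.norm_eq_abs, abs_mul,
          abs_of_pos (by positivity : (0:ℝ) < 2*π)]
      have h3 : 2 * |(n:ℝ)| ≤ 2 * π * |(n:ℝ)| := by
        nlinarith [abs_nonneg ((n:ℝ)), Real.pi_gt_three]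
      have hda : |(n:ℝ)| ≤ ‖a - 2 * π * n‖ := by
        have h1 : ‖(2 * (π:ℂ) * n)‖ - ‖a‖ ≤ ‖a - 2 * π * n‖ := by
          calc ‖(2 * (π:ℂ) * n)‖ - ‖a‖ ≤ ‖(2 * (π:ℂ) * n) - a‖ := norm_sub_norm_le _ _
          _ = ‖a - 2 * π * n‖ := norm_sub_rev _ _
        nlinarith
      have hdb : |(n:ℝ)| ≤ ‖b - 2 * π * n‖ := by
        have h1 : ‖(2 * (π:ℂ) * n)‖ - ‖b‖ ≤ ‖b - 2 * π * n‖ := by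
          calc ‖(2 * (π:ℂ) * n)‖ - ‖b‖ ≤ ‖(2 * (π:ℂ) * n) - b‖ := norm_sub_norm_le _ _
          _ = ‖b - 2 * π * n‖ := norm_sub_rev _ _
        nlinarith
      have hcval : c n = (-(2 * (π:ℂ))) / ((a - 2 * π * n) * (b - 2 * π * n)) := by
        rw [hc]
        have h3 := ha2 n
        have h4 := hb2 n
        field_simp
        rw [ha, hb]; ring
      have hnpos : (1:ℝ) ≤ |(n:ℝ)| := by
        have := norm_nonneg a; have := norm_nonneg b; linarith
      rw [hcval, norm_div, norm_mul, norm_neg]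
      have h6 : ‖(2 * (π:ℂ))‖ = 2 * π := by
        rw [show (2 * (π:ℂ)) = ((2 * π : ℝ) : ℂ) by push_cast; ring,
          Complex.norm_real, Real.norm_eq_abs, abs_of_pos (by positivity)]
      have habs : |1 / (n:ℝ)^2| = 1 / |(n:ℝ)|^2 := by
        rw [abs_div, abs_one, _root_.abs_pow]
      rw [habs, h6]
      have hprod : |(n:ℝ)|^2 ≤ ‖a - 2 * π * n‖ * ‖b - 2 * π * n‖ := by
        nlinarith [abs_nonneg ((n:ℝ))]
      have hpp : (0:ℝ) < ‖a - 2 * π * n‖ * ‖b - 2 * π * n‖ := by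
        have hA := norm_pos_iff.mpr (ha2 n)
        have hB := norm_pos_iff.mpr (hb2 n)
        positivity
      rw [div_le_iff₀ hpp]
      have step : 2 * π * (1 / |(n:ℝ)|^2) * |(n:ℝ)|^2
          ≤ 2 * π * (1 / |(n:ℝ)|^2) * (‖a - 2 * π * n‖ * ‖b - 2 * π * n‖) := by
        apply mul_le_mul_of_nonneg_left hprod
        positivity
      have id1 : 2 * π * (1 / |(n:ℝ)|^2) * |(n:ℝ)|^2 = 2 * π := by
        have hq : (0:ℝ) < ((n:ℝ))^2 := by
          nlinarith [_root_.sq_abs ((n:ℝ)), abs_nonneg ((n:ℝ))]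
        have hq' : ((n:ℝ))^2 ≠ 0 := ne_of_gt hq
        have : |(n:ℝ)| ≠ 0 := by positivity
        field_simp
      linarith
    constructor
    · filter_upwards [Filter.eventually_le_atBot (-⌈‖a‖ + ‖b‖ + 1⌉)] with n hn
      apply key
      have : ((-⌈‖a‖ + ‖b‖ + 1⌉ : ℤ) : ℝ) ≤ (n:ℝ) → True := fun _ => trivial
      have h1 : (n:ℝ) ≤ -(‖a‖ + ‖b‖ + 1) := by
        calc (n:ℝ) ≤ ((-⌈‖a‖ + ‖b‖ + 1⌉ : ℤ) : ℝ) := by exact_mod_cast hn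
        _ ≤ -(‖a‖ + ‖b‖ + 1) := by
            push_cast; simp only [neg_le_neg_iff]; exact Int.le_ceil _
      calc ‖a‖ + ‖b‖ + 1 ≤ -(n:ℝ) := by linarith
      _ ≤ |(n:ℝ)| := neg_le_abs _
    · filter_upwards [Filter.eventually_ge_atTop (⌈‖a‖ + ‖b‖ + 1⌉)] with n hn
      apply key
      have h1 : ‖a‖ + ‖b‖ + 1 ≤ (n:ℝ) := by
        calc ‖a‖ + ‖b‖ + 1 ≤ ((⌈‖a‖ + ‖b‖ + 1⌉ : ℤ) : ℝ) := Int.le_ceil _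
        _ ≤ (n:ℝ) := by exact_mod_cast hn
      exact h1.trans (le_abs_self _)
  -- Fourier series pointwise convergence at α
  have hsum2 : Summable (fourierCoeff (F : AddCircle (1:ℝ) → ℂ)) := by
    rw [show fourierCoeff (F : AddCircle (1:ℝ) → ℂ) = c from funext hcoef]
    exact hsummable
  have hpt := has_pointwise_sum_fourier_series_of_summable (T := 1) hsum2 ((α : ℝ) : AddCircle (1:ℝ))
  -- value of F at α
  have hval : (F : AddCircle (1:ℝ) → ℂ) ((α : ℝ) : AddCircle (1:ℝ))
      = 2 * Real.sin (π * α) * Complex.exp ((α:ℂ) * ((s:ℂ) + Complex.I * θ)) / D := by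
    have hmem : (α:ℝ) ∈ Set.Ico (0:ℝ) 1 := ⟨hα.1.le, hα.2⟩
    have : (F : AddCircle (1:ℝ) → ℂ) ((α : ℝ) : AddCircle (1:ℝ)) = g α := by
      simp only [hF, ContinuousMap.coe_mk]
      exact AddCircle.liftIco_zero_coe_apply hmem
    rw [this, hg]
    have e1 : Complex.I * a * α = (α:ℂ) * ((s:ℂ) + Complex.I * θ) + (π * α) * Complex.I := by
      rw [ha]; push_cast; linear_combination (-(s:ℂ)*(α:ℂ)) * Complex.I_sq
    have e2 : Complex.I * b * α = (α:ℂ) * ((s:ℂ) + Complex.I * θ) + -((π * α) * Complex.I) := by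
      rw [hb]; push_cast; linear_combination (-(s:ℂ)*(α:ℂ)) * Complex.I_sq
    simp only [e1, e2, Complex.exp_add]
    have hsin : ((Real.sin (π * α) : ℝ) : ℂ) = Complex.sin ((π * α : ℝ) : ℂ) := by
      rw [Complex.ofReal_sin]
    rw [hsin, Complex.sin]
    have hDne : D ≠ 0 := h
    field_simp
    push_cast
    ring_nf
  rw [← hD] at *
  -- convert to the ℤ-indexed HasSum of the target terms
  have hterm : (fun j : ℤ => Complex.exp (-2 * π * Complex.I * α * (j:ℂ)) *
          (1 / (((θ:ℂ) + 2 * (j:ℂ) * π) + π - Complex.I * s) -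
           1 / (((θ:ℂ) + 2 * (j:ℂ) * π) - π - Complex.I * s)))
      = (fun n : ℤ => fourierCoeff (F : AddCircle (1:ℝ) → ℂ) n •
          fourier n (((α:ℝ) : AddCircle (1:ℝ)))) ∘ (Equiv.neg ℤ) := by
    funext j
    simp only [Function.comp_apply, Equiv.neg_apply, smul_eq_mul]
    rw [hcoef (-j), fourier_coe_apply]
    simp only [hc]
    have e1 : a - 2 * π * ((-j : ℤ) : ℂ) = ((θ:ℂ) + 2 * (j:ℂ) * π) + π - Complex.I * s := by
      rw [ha]; push_cast; ring
    have e2 : b - 2 * π * ((-j : ℤ) : ℂ) = ((θ:ℂ) + 2 * (j:ℂ) * π) - π - Complex.I * s := by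
      rw [hb]; push_cast; ring
    rw [e1, e2]
    rw [show (2 * (π:ℂ) * Complex.I * ((-j : ℤ) : ℂ) * (α:ℝ) / ((1:ℝ):ℂ))
        = -2 * π * Complex.I * α * (j:ℂ) by push_cast; field_simp]
    ring
  have hHS : HasSum (fun j : ℤ => Complex.exp (-2 * π * Complex.I * α * (j:ℂ)) *
          (1 / (((θ:ℂ) + 2 * (j:ℂ) * π) + π - Complex.I * s) -
           1 / (((θ:ℂ) + 2 * (j:ℂ) * π) - π - Complex.I * s)))
      (2 * Real.sin (π * α) * Complex.exp ((α:ℂ) * ((s:ℂ) + Complex.I * θ)) / D) := by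
    rw [hterm, ← hval]
    exact ((Equiv.neg ℤ).hasSum_iff).mpr hpt
  -- symmetric partial sums
  have hIcc : Tendsto (fun N : ℕ => Finset.Icc (-(N:ℤ)) (N:ℤ)) atTop atTop := by
    apply tendsto_atTop_finset_of_monotone
    · intro m n hmn
      apply Finset.Icc_subset_Icc
      · exact neg_le_neg (by exact_mod_cast hmn)
      · exact_mod_cast hmn
    · intro x
      refine ⟨x.natAbs, Finset.mem_Icc.mpr ⟨?_, ?_⟩⟩
      · rw [← Int.abs_eq_natAbs]
        exact neg_abs_le x
      · rw [← Int.abs_eq_natAbs]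
        exact le_abs_self x
  exact hHS.comp hIcc
end

section
/- For α > 0 and m, n ∈ ℕ, ∫_0^∞ x^α e^{-x} L_m^α(x) L_n^α(x) dx = (Γ(n+α+1)/n!) δ_{n,m}, where L_m^α is the generalized Laguerre polynomial L_m^α(x) = ∑_{k=0}^m (−1)^k binom(m+α, m−k) x^k/k!. -/
open Real MeasureTheory

section LaguerreAux

open Finset fwdDiff


lemma fwdDiff_iter_zero (m : ℕ) :
    (fwdDiff (1:ℝ))^[m] (fun _ => (0:ℝ)) = fun _ => 0 := by
  induction m with
  | zero => simp
  | succ k ihk =>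
    rw [Function.iterate_succ_apply]
    have : Δ_[(1:ℝ)] (fun _ => (0:ℝ)) = fun _ => (0:ℝ) := by funext x; simp [fwdDiff]
    rw [this]; exact ihk

lemma neg_one_pow_sub {m k : ℕ} (h : k ≤ m) : ((-1:ℝ))^(m-k) = (-1)^m * (-1)^k := by
  conv_rhs => rw [← Nat.sub_add_cancel h]
  rw [pow_add, mul_assoc, ← pow_add, ← two_mul, pow_mul]
  norm_num

/-- The rising-factorial-type polynomial `x ↦ ∏_{j<l} (c + x + j)`. -/
noncomputable def Pp (c : ℝ) (l : ℕ) : ℝ → ℝ := fun x => ∏ j ∈ Finset.range l, (c + x + j)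

lemma fwdDiff_Pp (c : ℝ) (l : ℕ) :
    Δ_[(1:ℝ)] (Pp c (l + 1)) = fun x => (l + 1 : ℝ) * Pp (c + 1) l x := by
  funext x
  have h1 : Pp c (l+1) (x + 1) = Pp (c+1) l x * (c + x + (l+1)) := by
    rw [Pp, Finset.prod_range_succ]
    congr 1
    · exact Finset.prod_congr rfl fun j _ => by push_cast; ring
    · push_cast; ring
  have h2 : Pp c (l+1) x = Pp (c+1) l x * (c + x) := by
    rw [Pp, Finset.prod_range_succ']
    congr 1
    · exact Finset.prod_congr rfl fun j _ => by push_cast; ring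
    · push_cast; ring
  simp only [fwdDiff, h1, h2]
  ring

lemma fwdDiff_iter_Pp_lt (m : ℕ) : ∀ c : ℝ, ∀ l : ℕ, l < m →
    (fwdDiff (1:ℝ))^[m] (Pp c l) = fun _ => 0 := by
  induction m with
  | zero => intro c l h; omega
  | succ m ih =>
    intro c l h
    cases l with
    | zero =>
      have : Pp c 0 = fun _ => (1:ℝ) := by funext x; simp [Pp]
      rw [Function.iterate_succ_apply, this]
      have h0 : Δ_[(1:ℝ)] (fun _ => (1:ℝ)) = fun _ => (0:ℝ) := by
        funext x; simp [fwdDiff]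
      rw [h0]
      exact fwdDiff_iter_zero m
    | succ l =>
      rw [Function.iterate_succ_apply, fwdDiff_Pp]
      have : (fun x => (l + 1 : ℝ) * Pp (c + 1) l x) = (l+1:ℝ) • Pp (c+1) l := rfl
      rw [this, fwdDiff_iter_const_smul, ih (c+1) l (by omega)]
      funext x; simp

lemma fwdDiff_iter_Pp_eq (m : ℕ) : ∀ c : ℝ,
    (fwdDiff (1:ℝ))^[m] (Pp c m) = fun _ => (m.factorial : ℝ) := by
  induction m with
  | zero =>
    intro c; funext x; simp [Pp]
  | succ m ih =>
    intro c
    rw [Function.iterate_succ_apply, fwdDiff_Pp]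
    have : (fun x => (m + 1 : ℝ) * Pp (c + 1) m x) = (m+1:ℝ) • Pp (c+1) m := rfl
    rw [this, fwdDiff_iter_const_smul, ih (c+1)]
    funext x
    simp [Nat.factorial_succ]

/-- Alternating sum in terms of iterated forward differences. -/
lemma alt_sum_eq_fwdDiff (f : ℝ → ℝ) (m : ℕ) :
    ∑ k ∈ range (m+1), (-1:ℝ)^k * (m.choose k : ℝ) * f k
      = (-1:ℝ)^m * (fwdDiff (1:ℝ))^[m] f 0 := by
  rw [fwdDiff_iter_eq_sum_shift (1:ℝ) f m 0, Finset.mul_sum]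
  refine Finset.sum_congr rfl fun k hk => ?_
  have hk' : k ≤ m := by simpa [Nat.lt_succ_iff] using hk
  have h0 : (0:ℝ) + k • (1:ℝ) = (k:ℝ) := by simp
  rw [zsmul_eq_mul, h0]
  push_cast
  rw [neg_one_pow_sub hk']
  ring_nf
  rw [show m * 2 = 2 * m by ring, pow_mul]
  norm_num

lemma Gamma_add_nat (s : ℝ) (hs : 0 < s) (l : ℕ) :
    Real.Gamma (s + l) = Real.Gamma s * ∏ j ∈ range l, (s + j) := by
  induction l with
  | zero => simp
  | succ l ih =>
    have h : s + ((l:ℕ)+1 : ℕ) = (s + l) + 1 := by push_cast; ring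
    have hne : s + (l:ℝ) ≠ 0 := by positivity
    rw [h, Real.Gamma_add_one hne, ih, prod_range_succ]
    ring

lemma Gamma_split (α : ℝ) (hα : 0 < α) (k l : ℕ) :
    Real.Gamma (α + k + l + 1) = Real.Gamma ((k:ℝ) + α + 1) * Pp (α+1) l k := by
  have h1 : α + (k:ℝ) + l + 1 = (α + 1 + k) + l := by ring
  simp only [Pp]
  rw [h1, Gamma_add_nat _ (by positivity) l,
    show α + 1 + (k:ℝ) = (k:ℝ) + α + 1 by ring]

lemma sum_k_eq (α : ℝ) (hα : 0 < α) (m l : ℕ) :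
    ∑ k ∈ range (m+1),
      (-1:ℝ)^k / (Real.Gamma ((k:ℝ)+α+1) * ((m-k).factorial:ℝ)) / (k.factorial:ℝ)
        * Real.Gamma (α + k + l + 1)
    = (1 / (m.factorial:ℝ)) * ((-1:ℝ)^m * (fwdDiff (1:ℝ))^[m] (Pp (α+1) l) 0) := by
  rw [← alt_sum_eq_fwdDiff, Finset.mul_sum]
  refine sum_congr rfl fun k hk => ?_
  have hk' : k ≤ m := by simpa [Nat.lt_succ_iff] using hk
  rw [Gamma_split α hα k l, Nat.cast_choose ℝ hk']
  have h1 : Real.Gamma ((k:ℝ)+α+1) ≠ 0 := ne_of_gt (Real.Gamma_pos_of_pos (by positivity))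
  have h2 : ((m-k).factorial:ℝ) ≠ 0 := Nat.cast_ne_zero.2 (Nat.factorial_ne_zero _)
  have h3 : (k.factorial:ℝ) ≠ 0 := Nat.cast_ne_zero.2 (Nat.factorial_ne_zero _)
  have h4 : (m.factorial:ℝ) ≠ 0 := Nat.cast_ne_zero.2 (Nat.factorial_ne_zero _)
  field_simp

lemma sum_k_lt (α : ℝ) (hα : 0 < α) {m l : ℕ} (h : l < m) :
    ∑ k ∈ range (m+1),
      (-1:ℝ)^k / (Real.Gamma ((k:ℝ)+α+1) * ((m-k).factorial:ℝ)) / (k.factorial:ℝ)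
        * Real.Gamma (α + k + l + 1) = 0 := by
  rw [sum_k_eq α hα, fwdDiff_iter_Pp_lt m (α+1) l h]
  simp

lemma sum_k_self (α : ℝ) (hα : 0 < α) (m : ℕ) :
    ∑ k ∈ range (m+1),
      (-1:ℝ)^k / (Real.Gamma ((k:ℝ)+α+1) * ((m-k).factorial:ℝ)) / (k.factorial:ℝ)
        * Real.Gamma (α + k + m + 1) = (-1:ℝ)^m := by
  rw [sum_k_eq α hα, fwdDiff_iter_Pp_eq m (α+1)]
  have h4 : (m.factorial:ℝ) ≠ 0 := Nat.cast_ne_zero.2 (Nat.factorial_ne_zero _)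
  field_simp

lemma comb (α : ℝ) (hα : 0 < α) (m n : ℕ) :
    ∑ k ∈ range (m+1), ∑ l ∈ range (n+1),
      ((-1:ℝ)^k * (Real.Gamma ((m:ℝ)+α+1) /
          (Real.Gamma ((k:ℝ)+α+1) * (((m-k).factorial:ℕ):ℝ))) / ((k.factorial:ℕ):ℝ))
      * ((-1:ℝ)^l * (Real.Gamma ((n:ℝ)+α+1) /
          (Real.Gamma ((l:ℝ)+α+1) * (((n-l).factorial:ℕ):ℝ))) / ((l.factorial:ℕ):ℝ))
      * Real.Gamma (α + k + l + 1)
    = Real.Gamma ((n:ℝ)+α+1) / ((n.factorial:ℕ):ℝ) * (if n = m then 1 else 0) := by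
  set A := Real.Gamma ((m:ℝ)+α+1) with hA
  set B := Real.Gamma ((n:ℝ)+α+1) with hB
  rcases lt_trichotomy m n with hmn | rfl | hnm
  · -- m < n : inner sum over l vanishes for each k ≤ m
    rw [if_neg (by omega), mul_zero]
    refine Finset.sum_eq_zero fun k hk => ?_
    have hk' : k ≤ m := by simpa [Nat.lt_succ_iff] using hk
    have hz := sum_k_lt α hα (lt_of_le_of_lt hk' hmn) (m := n) (l := k)
    have : ∑ l ∈ range (n+1),
        ((-1:ℝ)^k * (A / (Real.Gamma ((k:ℝ)+α+1) * (((m-k).factorial:ℕ):ℝ))) / ((k.factorial:ℕ):ℝ))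
        * ((-1:ℝ)^l * (B / (Real.Gamma ((l:ℝ)+α+1) * (((n-l).factorial:ℕ):ℝ))) / ((l.factorial:ℕ):ℝ))
        * Real.Gamma (α + k + l + 1)
      = ((-1:ℝ)^k * (A / (Real.Gamma ((k:ℝ)+α+1) * (((m-k).factorial:ℕ):ℝ))) / ((k.factorial:ℕ):ℝ)) * B
        * ∑ l ∈ range (n+1),
            (-1:ℝ)^l / (Real.Gamma ((l:ℝ)+α+1) * (((n-l).factorial:ℕ):ℝ)) / ((l.factorial:ℕ):ℝ)
              * Real.Gamma (α + l + k + 1) := by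
      rw [Finset.mul_sum]
      refine sum_congr rfl fun l _ => ?_
      rw [show α + (l:ℝ) + k + 1 = α + k + l + 1 by ring]
      ring
    rw [this, hz, mul_zero]
  · -- m = n
    rw [if_pos rfl, mul_one]
    rw [Finset.sum_comm]
    have key : ∀ l ∈ range (m+1),
        (∑ k ∈ range (m+1),
          ((-1:ℝ)^k * (A / (Real.Gamma ((k:ℝ)+α+1) * (((m-k).factorial:ℕ):ℝ))) / ((k.factorial:ℕ):ℝ))
          * ((-1:ℝ)^l * (A / (Real.Gamma ((l:ℝ)+α+1) * (((m-l).factorial:ℕ):ℝ))) / ((l.factorial:ℕ):ℝ))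
          * Real.Gamma (α + k + l + 1))
        = ((-1:ℝ)^l * (A / (Real.Gamma ((l:ℝ)+α+1) * (((m-l).factorial:ℕ):ℝ))) / ((l.factorial:ℕ):ℝ)) * A
          * ∑ k ∈ range (m+1),
              (-1:ℝ)^k / (Real.Gamma ((k:ℝ)+α+1) * (((m-k).factorial:ℕ):ℝ)) / ((k.factorial:ℕ):ℝ)
                * Real.Gamma (α + k + l + 1) := by
      intro l _
      rw [Finset.mul_sum]
      exact sum_congr rfl fun k _ => by ring
    rw [Finset.sum_congr rfl key]
    rw [Finset.sum_range_succ]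
    have hzero : ∑ l ∈ range m,
        ((-1:ℝ)^l * (A / (Real.Gamma ((l:ℝ)+α+1) * (((m-l).factorial:ℕ):ℝ))) / ((l.factorial:ℕ):ℝ)) * A
          * ∑ k ∈ range (m+1),
              (-1:ℝ)^k / (Real.Gamma ((k:ℝ)+α+1) * (((m-k).factorial:ℕ):ℝ)) / ((k.factorial:ℕ):ℝ)
                * Real.Gamma (α + k + l + 1) = 0 := by
      refine Finset.sum_eq_zero fun l hl => ?_
      rw [sum_k_lt α hα (Finset.mem_range.1 hl), mul_zero]
    rw [hzero, zero_add, sum_k_self α hα m]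
    have h1 : Real.Gamma ((m:ℝ)+α+1) ≠ 0 := ne_of_gt (Real.Gamma_pos_of_pos (by positivity))
    have h3 : ((m.factorial:ℕ):ℝ) ≠ 0 := Nat.cast_ne_zero.2 (Nat.factorial_ne_zero _)
    rw [Nat.sub_self, Nat.factorial_zero]
    rw [← hA]
    field_simp
    rw [← pow_mul, mul_comm m 2, pow_mul, hA, hB]
    norm_num
  · -- n < m : inner sum over k vanishes for each l ≤ n
    rw [if_neg (by omega), mul_zero]
    rw [Finset.sum_comm]
    refine Finset.sum_eq_zero fun l hl => ?_
    have hl' : l ≤ n := by simpa [Nat.lt_succ_iff] using hl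
    have hz := sum_k_lt α hα (lt_of_le_of_lt hl' hnm) (m := m) (l := l)
    have : ∑ k ∈ range (m+1),
        ((-1:ℝ)^k * (A / (Real.Gamma ((k:ℝ)+α+1) * (((m-k).factorial:ℕ):ℝ))) / ((k.factorial:ℕ):ℝ))
        * ((-1:ℝ)^l * (B / (Real.Gamma ((l:ℝ)+α+1) * (((n-l).factorial:ℕ):ℝ))) / ((l.factorial:ℕ):ℝ))
        * Real.Gamma (α + k + l + 1)
      = ((-1:ℝ)^l * (B / (Real.Gamma ((l:ℝ)+α+1) * (((n-l).factorial:ℕ):ℝ))) / ((l.factorial:ℕ):ℝ)) * A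
        * ∑ k ∈ range (m+1),
            (-1:ℝ)^k / (Real.Gamma ((k:ℝ)+α+1) * (((m-k).factorial:ℕ):ℝ)) / ((k.factorial:ℕ):ℝ)
              * Real.Gamma (α + k + l + 1) := by
      rw [Finset.mul_sum]
      exact sum_congr rfl fun k _ => by ring
    rw [this, hz, mul_zero]

/-- Generalized Laguerre polynomial `L_m^α`, with generalized binomial coefficient
`binom(m+α, m−k) = Γ(m+α+1)/(Γ(k+α+1)(m−k)!)`. -/
noncomputable def genLaguerre (α : ℝ) (m : ℕ) (x : ℝ) : ℝ :=
  ∑ k ∈ Finset.range (m + 1),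
    (-1 : ℝ) ^ k * (Real.Gamma ((m : ℝ) + α + 1) /
      (Real.Gamma ((k : ℝ) + α + 1) * ((m - k).factorial : ℝ))) * x ^ k /
      (k.factorial : ℝ)

theorem stmt_13 (α : ℝ) (hα : 0 < α) (m n : ℕ) :
    ∫ x in Set.Ioi (0:ℝ),
        x ^ α * Real.exp (-x) * genLaguerre α m x * genLaguerre α n x =
      Real.Gamma ((n : ℝ) + α + 1) / (n.factorial : ℝ) * (if n = m then 1 else 0) := by
  set C : ℕ → ℕ → ℝ := fun M k =>
    (-1:ℝ)^k * (Real.Gamma ((M:ℝ)+α+1) /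
      (Real.Gamma ((k:ℝ)+α+1) * (((M-k).factorial:ℕ):ℝ))) / ((k.factorial:ℕ):ℝ) with hC
  have hpoint : Set.EqOn
      (fun x => x ^ α * Real.exp (-x) * genLaguerre α m x * genLaguerre α n x)
      (fun x => ∑ l ∈ range (n+1), ∑ k ∈ range (m+1),
        (C m k * C n l) * (Real.exp (-x) * x ^ ((α + k + l + 1) - 1)))
      (Set.Ioi (0:ℝ)) := by
    intro x hx
    have hx0 : (0:ℝ) < x := hx
    simp only [genLaguerre, hC]
    rw [Finset.mul_sum]
    refine Finset.sum_congr rfl fun l _ => ?_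
    rw [Finset.mul_sum, Finset.sum_mul]
    refine Finset.sum_congr rfl fun k _ => ?_
    have hs : α + (k:ℝ) + l + 1 - 1 = α + ((k + l : ℕ) : ℝ) := by push_cast; ring
    rw [hs, Real.rpow_add hx0, Real.rpow_natCast, pow_add]
    ring
  rw [setIntegral_congr_fun measurableSet_Ioi hpoint]
  have hint : ∀ (k l : ℕ), IntegrableOn
      (fun x => (C m k * C n l) * (Real.exp (-x) * x ^ ((α + k + l + 1) - 1)))
      (Set.Ioi (0:ℝ)) := by
    intro k l
    exact (Real.GammaIntegral_convergent (by positivity : (0:ℝ) < α + k + l + 1)).const_mul _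
  rw [MeasureTheory.integral_finset_sum _ (fun l _ =>
    integrable_finset_sum _ (fun k _ => hint k l))]
  have : ∀ l ∈ range (n+1),
      (∫ x in Set.Ioi (0:ℝ), ∑ k ∈ range (m+1),
        (C m k * C n l) * (Real.exp (-x) * x ^ ((α + k + l + 1) - 1)))
      = ∑ k ∈ range (m+1), C m k * C n l * Real.Gamma (α + k + l + 1) := by
    intro l _
    rw [MeasureTheory.integral_finset_sum _ (fun k _ => hint k l)]
    refine Finset.sum_congr rfl fun k _ => ?_
    rw [MeasureTheory.integral_const_mul,
      ← Real.Gamma_eq_integral (by positivity : (0:ℝ) < α + k + l + 1)]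
  rw [Finset.sum_congr rfl this, Finset.sum_comm]
  exact comb α hα m n

end LaguerreAux
end

section
/- Let α ∈ (0,1), B₀ > 0. In polar coordinates on ℝ²∖{0}, the functions V_{k,m}(r,θ) = r^{|k+α|} e^{-B₀r²/4} P_{k,m}(B₀r²/2) e^{ikθ} satisfy (−∂_r² − (1/r)∂_r + (1/r²)(−i∂_θ + α + B₀r²/2)²) V_{k,m} = λ_{k,m} V_{k,m} with λ_{k,m} = (2m+1+|k+α|)B₀ + (k+α)B₀, for every k ∈ ℤ and m ∈ ℕ. -/
open Real Complex Finset

/-- The polynomial `P_{k,m}`. -/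
noncomputable def Pkm (α : ℝ) (k : ℤ) (m : ℕ) (r : ℝ) : ℝ :=
  ∑ n ∈ Finset.range (m + 1),
    (ascPochhammer ℝ n).eval (-(m : ℝ)) /
      (ascPochhammer ℝ n).eval (1 + |(k : ℝ) + α|) * r ^ n / (n.factorial : ℝ)

/-- The eigenfunctions in polar coordinates:
`V_{k,m}(r,θ) = r^{|k+α|} e^{-B₀r²/4} P_{k,m}(B₀r²/2) e^{ikθ}`. -/
noncomputable def Vkm (B₀ α : ℝ) (k : ℤ) (m : ℕ) (r θ : ℝ) : ℂ :=
  ((r ^ |(k : ℝ) + α| * Real.exp (-B₀ * r ^ 2 / 4) * Pkm α k m (B₀ * r ^ 2 / 2) : ℝ) : ℂ) *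
    Complex.exp (Complex.I * (k : ℂ) * (θ : ℂ))

/-- The angular operator `(−i∂_θ + α + B₀r²/2)` applied to a function of `(r,θ)`. -/
noncomputable def angOp (B₀ α : ℝ) (f : ℝ → ℝ → ℂ) (r θ : ℝ) : ℂ :=
  -Complex.I * deriv (fun θ' => f r θ') θ + ((α : ℂ) + (B₀ : ℂ) * (r : ℂ) ^ 2 / 2) * f r θ


/-- coefficient `b_n = ((-m)_n/(1+β)_n/n!) (B₀/2)^n`. -/
noncomputable def bcAux (B₀ β : ℝ) (m : ℕ) (n : ℕ) : ℝ :=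
  (ascPochhammer ℝ n).eval (-(m : ℝ)) / (ascPochhammer ℝ n).eval (1 + β)
    / (n.factorial : ℝ) * (B₀ / 2) ^ n

lemma bcAux_rec (B₀ β : ℝ) (hβ : 0 ≤ β) (m n : ℕ) :
    4 * ((n : ℝ) + 1) * ((n : ℝ) + 1 + β) * bcAux B₀ β m (n + 1)
      = 2 * ((n : ℝ) - (m : ℝ)) * B₀ * bcAux B₀ β m n := by
  have h1 : (ascPochhammer ℝ n).eval (1 + β) ≠ 0 :=
    (ascPochhammer_pos n (1 + β) (by linarith)).ne'
  have h2 : (1 : ℝ) + β + n ≠ 0 := by positivity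
  have h3 : ((n.factorial : ℝ)) ≠ 0 := by positivity
  have h4 : ((n : ℝ) + 1) ≠ 0 := by positivity
  simp only [bcAux, ascPochhammer_succ_eval, Nat.factorial_succ, Nat.cast_mul, Nat.cast_add,
    Nat.cast_one, pow_succ]
  field_simp
  ring

lemma bcAux_top (B₀ β : ℝ) (m : ℕ) : bcAux B₀ β m (m + 1) = 0 := by
  simp [bcAux, ascPochhammer_succ_eval]

lemma sumAux (B₀ β : ℝ) (hβ : 0 ≤ β) (m : ℕ) {x : ℝ} (hx : x ≠ 0) :
    ∑ n ∈ Finset.range (m + 1),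
      bcAux B₀ β m n * (-4 * (n : ℝ) * ((n : ℝ) + β) / x + 2 * ((n : ℝ) - (m : ℝ)) * B₀) * x ^ n
      = 0 := by
  set u : ℕ → ℝ := fun n => 4 * (n : ℝ) * ((n : ℝ) + β) * bcAux B₀ β m n * x ^ n / x with hu
  have key : ∀ n ∈ Finset.range (m + 1),
      bcAux B₀ β m n * (-4 * (n : ℝ) * ((n : ℝ) + β) / x + 2 * ((n : ℝ) - (m : ℝ)) * B₀) * x ^ n
        = u (n + 1) - u n := by
    intro n _
    simp only [hu]
    push_cast
    have hrec := bcAux_rec B₀ β hβ m n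
    field_simp
    linear_combination (-x * x ^ n) * hrec
  rw [Finset.sum_congr rfl key, Finset.sum_range_sub]
  simp [hu, bcAux_top]

noncomputable def gAux (B₀ β : ℝ) (n : ℕ) (r : ℝ) : ℝ :=
  r ^ (β + 2 * (n : ℝ)) * Real.exp (-B₀ * r ^ 2 / 4)

noncomputable def qAux (B₀ β : ℝ) (n : ℕ) (r : ℝ) : ℝ :=
  (β + 2 * (n : ℝ)) / r - B₀ * r / 2

lemma gAux_hasDerivAt (B₀ β : ℝ) (n : ℕ) {r : ℝ} (hr : 0 < r) :
    HasDerivAt (gAux B₀ β n) (qAux B₀ β n r * gAux B₀ β n r) r := by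
  have h1 : HasDerivAt (fun x : ℝ => x ^ (β + 2 * (n : ℝ)))
      ((β + 2 * (n : ℝ)) * r ^ (β + 2 * (n : ℝ) - 1)) r :=
    Real.hasDerivAt_rpow_const (Or.inl hr.ne')
  have h2 : HasDerivAt (fun x : ℝ => Real.exp (-B₀ * x ^ 2 / 4))
      (-B₀ * (2 * r) / 4 * Real.exp (-B₀ * r ^ 2 / 4)) r := by
    have hi : HasDerivAt (fun x : ℝ => -B₀ * x ^ 2 / 4) (-B₀ * (2 * r) / 4) r := by
      simpa using (((hasDerivAt_pow 2 r).const_mul (-B₀)).div_const 4)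
    simpa [mul_comm] using hi.exp
  have := h1.mul h2
  refine this.congr_deriv ?_
  unfold qAux gAux
  rw [Real.rpow_sub hr, Real.rpow_one]
  field_simp
  ring

lemma qAux_hasDerivAt (B₀ β : ℝ) (n : ℕ) {r : ℝ} (hr : 0 < r) :
    HasDerivAt (qAux B₀ β n) (-(β + 2 * (n : ℝ)) / r ^ 2 - B₀ / 2) r := by
  have h1 : HasDerivAt (fun x : ℝ => (β + 2 * (n : ℝ)) / x)
      ((β + 2 * (n : ℝ)) * (-(r ^ 2)⁻¹)) r := by
    simpa [div_eq_mul_inv] using (hasDerivAt_inv hr.ne').const_mul (β + 2 * (n : ℝ))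
  have h2 : HasDerivAt (fun x : ℝ => B₀ * x / 2) (B₀ / 2) r := by
    simpa using ((hasDerivAt_id r).const_mul B₀).div_const 2
  refine (h1.sub h2).congr_deriv ?_
  ring

noncomputable def FAux (B₀ β : ℝ) (m : ℕ) (r : ℝ) : ℝ :=
  ∑ n ∈ Finset.range (m + 1), bcAux B₀ β m n * gAux B₀ β n r

noncomputable def F1Aux (B₀ β : ℝ) (m : ℕ) (r : ℝ) : ℝ :=
  ∑ n ∈ Finset.range (m + 1), bcAux B₀ β m n * (qAux B₀ β n r * gAux B₀ β n r)

noncomputable def F2Aux (B₀ β : ℝ) (m : ℕ) (r : ℝ) : ℝ :=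
  ∑ n ∈ Finset.range (m + 1), bcAux B₀ β m n *
    ((-(β + 2 * (n : ℝ)) / r ^ 2 - B₀ / 2) * gAux B₀ β n r
      + qAux B₀ β n r * (qAux B₀ β n r * gAux B₀ β n r))

lemma FAux_hasDerivAt (B₀ β : ℝ) (m : ℕ) {r : ℝ} (hr : 0 < r) :
    HasDerivAt (FAux B₀ β m) (F1Aux B₀ β m r) r :=
  HasDerivAt.fun_sum fun n _ => (gAux_hasDerivAt B₀ β n hr).const_mul _

lemma F1Aux_hasDerivAt (B₀ β : ℝ) (m : ℕ) {r : ℝ} (hr : 0 < r) :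
    HasDerivAt (F1Aux B₀ β m) (F2Aux B₀ β m r) r :=
  HasDerivAt.fun_sum fun n _ =>
    ((qAux_hasDerivAt B₀ β n hr).mul (gAux_hasDerivAt B₀ β n hr)).const_mul _

lemma FAux_eq (B₀ α : ℝ) (k : ℤ) (m : ℕ) {r : ℝ} (hr : 0 < r) :
    FAux B₀ |(k : ℝ) + α| m r
      = r ^ |(k : ℝ) + α| * Real.exp (-B₀ * r ^ 2 / 4) * Pkm α k m (B₀ * r ^ 2 / 2) := by
  unfold FAux Pkm bcAux gAux
  rw [Finset.mul_sum]
  refine Finset.sum_congr rfl fun n _ => ?_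
  have hxp : r ^ (|(k : ℝ) + α| + 2 * (n : ℝ))
      = r ^ |(k : ℝ) + α| * (r ^ 2) ^ n := by
    rw [Real.rpow_add hr, show (2 * (n : ℝ)) = ((2 * n : ℕ) : ℝ) by push_cast; ring,
      Real.rpow_natCast, pow_mul]
  rw [hxp, show (B₀ * r ^ 2 / 2) ^ n = (B₀ / 2) ^ n * (r ^ 2) ^ n by
    rw [← mul_pow]; ring_nf]
  ring

lemma angOp_aux' (B₀ α : ℝ) (k : ℤ) (f : ℝ → ℝ → ℂ) (A : ℂ) (r θ : ℝ)
    (hf : ∀ θ' : ℝ, f r θ' = A * Complex.exp (Complex.I * (k : ℂ) * (θ' : ℂ))) :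
    -Complex.I * deriv (fun θ' => f r θ') θ + ((α : ℂ) + (B₀ : ℂ) * (r : ℂ) ^ 2 / 2) * f r θ
      = (((k : ℝ) : ℂ) + (α : ℂ) + (B₀ : ℂ) * (r : ℂ) ^ 2 / 2) * f r θ := by
  have he : HasDerivAt (fun θ' : ℝ => Complex.exp (Complex.I * (k : ℂ) * (θ' : ℂ)))
      (Complex.exp (Complex.I * (k : ℂ) * (θ : ℂ)) * (Complex.I * (k : ℂ) * 1)) θ :=
    (((hasDerivAt_id θ).ofReal_comp).const_mul (Complex.I * (k : ℂ))).cexp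
  have hd : HasDerivAt (fun θ' : ℝ => f r θ')
      (A * (Complex.exp (Complex.I * (k : ℂ) * (θ : ℂ)) * (Complex.I * (k : ℂ) * 1))) θ := by
    have := he.const_mul A
    simpa only [← hf] using this
  rw [hd.deriv, hf θ]
  push_cast
  linear_combination (-A * (k : ℂ) * Complex.exp (Complex.I * (k : ℂ) * (θ : ℂ))) * Complex.I_sq

theorem stmt_16 (B₀ α : ℝ) (hB : 0 < B₀) (hα : α ∈ Set.Ioo (0:ℝ) 1)
    (k : ℤ) (m : ℕ) (r θ : ℝ) (hr : 0 < r) :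
    -(deriv (deriv (fun r' => Vkm B₀ α k m r' θ)) r)
      - (1 / (r : ℂ)) * deriv (fun r' => Vkm B₀ α k m r' θ) r
      + (1 / (r : ℂ) ^ 2) * angOp B₀ α (fun r' θ' => angOp B₀ α (Vkm B₀ α k m) r' θ') r θ
      = (((2 * (m : ℝ) + 1 + |(k : ℝ) + α|) * B₀ + ((k : ℝ) + α) * B₀ : ℝ) : ℂ) *
          Vkm B₀ α k m r θ := by
  set β := |(k : ℝ) + α| with hβdef
  have hβ : 0 ≤ β := abs_nonneg _
  set e := Complex.exp (Complex.I * (k : ℂ) * (θ : ℂ)) with he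
  -- Vkm in terms of FAux
  have hVeq : ∀ r' θ' : ℝ, 0 < r' → Vkm B₀ α k m r' θ'
      = ((FAux B₀ β m r' : ℝ) : ℂ) * Complex.exp (Complex.I * (k : ℂ) * (θ' : ℂ)) := by
    intro r' θ' hr'
    rw [Vkm, hβdef, FAux_eq B₀ α k m hr']
  -- radial derivatives
  have h1 : ∀ r' : ℝ, 0 < r' → HasDerivAt (fun x => ((FAux B₀ β m x : ℝ) : ℂ) * e)
      (((F1Aux B₀ β m r' : ℝ) : ℂ) * e) r' := fun r' hr' =>
    ((FAux_hasDerivAt B₀ β m hr').ofReal_comp).mul_const e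
  have hVf : ∀ r' : ℝ, 0 < r' → (fun x => Vkm B₀ α k m x θ)
      =ᶠ[nhds r'] fun x => ((FAux B₀ β m x : ℝ) : ℂ) * e := by
    intro r' hr'
    filter_upwards [Ioi_mem_nhds hr'] with s hs
    exact hVeq s θ hs
  have hVd : ∀ r' : ℝ, 0 < r' → HasDerivAt (fun x => Vkm B₀ α k m x θ)
      (((F1Aux B₀ β m r' : ℝ) : ℂ) * e) r' := fun r' hr' =>
    (h1 r' hr').congr_of_eventuallyEq (hVf r' hr')
  have hd1 : deriv (fun r' => Vkm B₀ α k m r' θ) r = ((F1Aux B₀ β m r : ℝ) : ℂ) * e :=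
    (hVd r hr).deriv
  have hd2 : deriv (deriv (fun r' => Vkm B₀ α k m r' θ)) r
      = ((F2Aux B₀ β m r : ℝ) : ℂ) * e := by
    have hev : deriv (fun r' => Vkm B₀ α k m r' θ)
        =ᶠ[nhds r] fun x => ((F1Aux B₀ β m x : ℝ) : ℂ) * e := by
      filter_upwards [Ioi_mem_nhds hr] with s hs
      exact (hVd s hs).deriv
    rw [Filter.EventuallyEq.deriv_eq hev]
    exact (((F1Aux_hasDerivAt B₀ β m hr).ofReal_comp).mul_const e).deriv
  -- angular part
  have hA1 : ∀ r' θ' : ℝ, angOp B₀ α (Vkm B₀ α k m) r' θ'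
      = (((k : ℝ) : ℂ) + (α : ℂ) + (B₀ : ℂ) * (r' : ℂ) ^ 2 / 2) * Vkm B₀ α k m r' θ' := by
    intro r' θ'
    exact angOp_aux' B₀ α k _ _ r' θ' (fun θ'' => rfl)
  have hA2 : angOp B₀ α (fun r' θ' => angOp B₀ α (Vkm B₀ α k m) r' θ') r θ
      = (((k : ℝ) : ℂ) + (α : ℂ) + (B₀ : ℂ) * (r : ℂ) ^ 2 / 2) ^ 2 * Vkm B₀ α k m r θ := by
    have hf : ∀ θ'' : ℝ, angOp B₀ α (Vkm B₀ α k m) r θ''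
        = ((((k : ℝ) : ℂ) + (α : ℂ) + (B₀ : ℂ) * (r : ℂ) ^ 2 / 2) *
            ((r ^ β * Real.exp (-B₀ * r ^ 2 / 4) * Pkm α k m (B₀ * r ^ 2 / 2) : ℝ) : ℂ)) *
          Complex.exp (Complex.I * (k : ℂ) * (θ'' : ℂ)) := by
      intro θ''
      rw [hA1 r θ'', Vkm, hβdef]
      push_cast
      ring
    have h2 := angOp_aux' B₀ α k (fun r' θ' => angOp B₀ α (Vkm B₀ α k m) r' θ')
      ((((k : ℝ) : ℂ) + (α : ℂ) + (B₀ : ℂ) * (r : ℂ) ^ 2 / 2) *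
        ((r ^ β * Real.exp (-B₀ * r ^ 2 / 4) * Pkm α k m (B₀ * r ^ 2 / 2) : ℝ) : ℂ)) r θ
      (fun θ'' => hf θ'')
    rw [angOp]
    refine h2.trans ?_
    show _ * angOp B₀ α (Vkm B₀ α k m) r θ = _
    rw [hA1 r θ]
    ring
  -- the real radial identity
  have hK : β ^ 2 = ((k : ℝ) + α) ^ 2 := by rw [hβdef, _root_.sq_abs]
  have hgn : ∀ n : ℕ, gAux B₀ β n r = (r ^ 2) ^ n * gAux B₀ β 0 r := by
    intro n
    unfold gAux
    rw [show β + 2 * ((0 : ℕ) : ℝ) = β by push_cast; ring,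
      Real.rpow_add hr, show (2 * (n : ℝ)) = ((2 * n : ℕ) : ℝ) by push_cast; ring,
      Real.rpow_natCast, pow_mul]
    ring
  have hreal : -(F2Aux B₀ β m r) - (1 / r) * F1Aux B₀ β m r
      + (1 / r ^ 2) * (((k : ℝ) + α + B₀ * r ^ 2 / 2)) ^ 2 * FAux B₀ β m r
      = ((2 * (m : ℝ) + 1 + β) * B₀ + ((k : ℝ) + α) * B₀) * FAux B₀ β m r := by
    rw [← sub_eq_zero]
    have collect : -(F2Aux B₀ β m r) - (1 / r) * F1Aux B₀ β m r
        + (1 / r ^ 2) * (((k : ℝ) + α + B₀ * r ^ 2 / 2)) ^ 2 * FAux B₀ β m r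
        - ((2 * (m : ℝ) + 1 + β) * B₀ + ((k : ℝ) + α) * B₀) * FAux B₀ β m r
        = ∑ n ∈ Finset.range (m + 1),
            bcAux B₀ β m n * (-4 * (n : ℝ) * ((n : ℝ) + β) / (r ^ 2)
              + 2 * ((n : ℝ) - (m : ℝ)) * B₀) * ((r ^ 2) ^ n) * gAux B₀ β 0 r := by
      unfold FAux F1Aux F2Aux
      rw [Finset.mul_sum, Finset.mul_sum, Finset.mul_sum, ← Finset.sum_neg_distrib,
        ← Finset.sum_sub_distrib, ← Finset.sum_add_distrib, ← Finset.sum_sub_distrib]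
      refine Finset.sum_congr rfl fun n _ => ?_
      rw [hgn n]
      unfold qAux
      have hr0 : r ≠ 0 := hr.ne'
      field_simp
      ring_nf
      linear_combination (-4 * gAux B₀ β 0 r * bcAux B₀ β m n) * hK
    rw [collect, ← Finset.sum_mul,
      sumAux B₀ β hβ m (x := r ^ 2) (pow_ne_zero 2 hr.ne'), zero_mul]
  -- assemble
  rw [hd1, hd2, hA2, hVeq r θ hr, ← he]
  push_cast
  rw [← sub_eq_zero]
  have : ((-(F2Aux B₀ β m r) - (1 / r) * F1Aux B₀ β m r
      + (1 / r ^ 2) * (((k : ℝ) + α + B₀ * r ^ 2 / 2)) ^ 2 * FAux B₀ β m r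
      - ((2 * (m : ℝ) + 1 + β) * B₀ + ((k : ℝ) + α) * B₀) * FAux B₀ β m r : ℝ) : ℂ) * e = 0 := by
    rw [sub_eq_zero.2 hreal]
    simp
  calc -(((F2Aux B₀ β m r : ℝ) : ℂ) * e) - (1 / (r:ℂ)) * (((F1Aux B₀ β m r : ℝ) : ℂ) * e)
        + (1 / (r:ℂ) ^ 2) * ((((k : ℝ) : ℂ) + (α : ℂ) + (B₀ : ℂ) * (r : ℂ) ^ 2 / 2) ^ 2
            * (((FAux B₀ β m r : ℝ) : ℂ) * e))
        - ((2 * (m : ℝ) + 1 + β) * B₀ + ((k : ℝ) + α) * B₀ : ℂ) * (((FAux B₀ β m r : ℝ) : ℂ) * e)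
      = ((-(F2Aux B₀ β m r) - (1 / r) * F1Aux B₀ β m r
          + (1 / r ^ 2) * (((k : ℝ) + α + B₀ * r ^ 2 / 2)) ^ 2 * FAux B₀ β m r
          - ((2 * (m : ℝ) + 1 + β) * B₀ + ((k : ℝ) + α) * B₀) * FAux B₀ β m r : ℝ) : ℂ) * e := by
        push_cast
        have hrC : (r : ℂ) ≠ 0 := by exact_mod_cast hr.ne'
        field_simp
    _ = 0 := this
end
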